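/- Let L : H¹ → R be a group linear map which is not identically zero, let a ∈ H¹, and let H : R → R be a function which is not subdifferentiable at L(a). Then the composition H ∘ L : H¹ → R is not Pansu subdifferentiable at a. -/

import Mathlib

open Filter Topology MeasureTheory
open scoped NNReal ENNReal

noncomputable section

/-- The underlying space of the first Heisenberg group: `ℝ³`. -/
abbrev Heis : Type := ℝ × ℝ × ℝ

/-- Heisenberg group multiplication:
`(x,y,t)·(x',y',t') = (x+x', y+y', t+t' − 2(xy' − yx'))`. -/
def hmul (p q : Heis) : Heis :=
  (p.1 + q.1, p.2.1 + q.2.1, p.2.2 + q.2.2 - 2 * (p.1 * q.2.1 - p.2.1 * q.1))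

/-- Heisenberg group inverse: `(x,y,t)⁻¹ = (−x,−y,−t)`. -/
def hinv (p : Heis) : Heis := (-p.1, -p.2.1, -p.2.2)

/-- Koranyi norm: `‖(x,y,t)‖ = ((x²+y²)² + t²)^(1/4)`. -/
def knorm (p : Heis) : ℝ := ((p.1 ^ 2 + p.2.1 ^ 2) ^ 2 + p.2.2 ^ 2) ^ ((1 : ℝ) / 4)

/-- Koranyi distance: `d_k(a,b) = ‖a⁻¹·b‖_k`. -/
def dk (p q : Heis) : ℝ := knorm (hmul (hinv p) q)

/-- Euclidean distance on `ℝ³`. -/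
def de (p q : Heis) : ℝ :=
  Real.sqrt ((p.1 - q.1) ^ 2 + (p.2.1 - q.2.1) ^ 2 + (p.2.2 - q.2.2) ^ 2)

/-- Dilation `δ_r(x,y,t) = (rx, ry, r²t)`. -/
def hdil (r : ℝ) (p : Heis) : Heis := (r * p.1, r * p.2.1, r ^ 2 * p.2.2)

/-- Open ball with respect to a distance function `d`. -/
def ballD {M : Type*} (d : M → M → ℝ) (x : M) (r : ℝ) : Set M := {y | d x y < r}

/-- `E` is `lam`-porous at `a` with respect to the distance function `d`: there are points
`x n` converging to `a` such that `B(x n, lam * d(x n, a))` misses `E`. -/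
def PorousAtD {M : Type*} (d : M → M → ℝ) (lam : ℝ) (E : Set M) (a : M) : Prop :=
  ∃ x : ℕ → M, Tendsto (fun n => d (x n) a) atTop (𝓝 0) ∧
    ∀ n, ballD d (x n) (lam * d (x n) a) ∩ E = ∅

/-- `E` is porous w.r.t. `d`: a single `lam ∈ (0,1)` works at every point of `E`. -/
def PorousD {M : Type*} (d : M → M → ℝ) (E : Set M) : Prop :=
  ∃ lam : ℝ, 0 < lam ∧ lam < 1 ∧ ∀ a ∈ E, PorousAtD d lam E a

/-- `E` is σ-porous w.r.t. `d`: a countable union of porous sets. -/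
def SigmaPorousD {M : Type*} (d : M → M → ℝ) (E : Set M) : Prop :=
  ∃ f : ℕ → Set M, (∀ n, PorousD d (f n)) ∧ E = ⋃ n, f n

/-- The translated dilated Cantor set `A_{n,k} = 2⁻ⁿ + k·2⁻²ⁿ + 2⁻²ⁿ·C`. -/
def Acantor (n k : ℕ) : Set ℝ :=
  (fun c => (2:ℝ) ^ (-(n:ℤ)) + (k : ℝ) * (2:ℝ) ^ (-(2*n:ℤ)) + (2:ℝ) ^ (-(2*n:ℤ)) * c) ''
    cantorSet

/-- `|(x,y)|` for `p = (x,y,t)`. -/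
def normxy (p : Heis) : ℝ := Real.sqrt (p.1 ^ 2 + p.2.1 ^ 2)

/-- `{0} ∪ ⋃_{n≥1} ⋃_{0 ≤ k ≤ 2ⁿ−1} {p : |(x,y)| ∈ A_{n,k}}`. -/
def cantorUnion : Set Heis :=
  {(0 : Heis)} ∪
    ⋃ (n : ℕ) (_ : 1 ≤ n) (k : ℕ) (_ : k < 2 ^ n), {p : Heis | normxy p ∈ Acantor n k}

/-- The cone `Λ = {(x,y,t) : |t| ≤ |(x,y)|}`. -/
def LambdaCone : Set Heis := {p : Heis | |p.2.2| ≤ normxy p}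

/-- The set `P_e = Λ ∩ ({0} ∪ ⋃ A_{n,k}-cylinders)`. -/
def Pe : Set Heis := LambdaCone ∩ cantorUnion

/-- The cusp `Υ = {(x,y,t) : |t| ≥ 2|(x,y)|²}`. -/
def UpsilonCusp : Set Heis := {p : Heis | 2 * normxy p ^ 2 ≤ |p.2.2|}

/-- The set `P_c = Υ ∩ ({0} ∪ ⋃ A_{n,k}-cylinders)`. -/
def Pc : Set Heis := UpsilonCusp ∩ cantorUnion

/-- `L : H¹ → ℝ` is group linear: additive on the group and homogeneous for dilations. -/
def GroupLinear (L : Heis → ℝ) : Prop :=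
  (∀ p q, L (hmul p q) = L p + L q) ∧ ∀ r : ℝ, 0 < r → ∀ p, L (hdil r p) = r * L p

/-- Pansu differentiability of `f : H¹ → ℝ` at `x₀`. -/
def PansuDiffAt (f : Heis → ℝ) (x₀ : Heis) : Prop :=
  ∃ L : Heis → ℝ, GroupLinear L ∧
    Tendsto (fun h => (f (hmul x₀ h) - f x₀ - L h) / dk h 0) (𝓝[≠] (0 : Heis)) (𝓝 0)

/-- Pansu subdifferentiability of `f : H¹ → ℝ` at `x₀`:
`liminf_{h→0} (f(x₀h) − f(x₀) − L(h))/d_k(h) ≥ 0` for some group linear `L`. -/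
def PansuSubdiffAt (f : Heis → ℝ) (x₀ : Heis) : Prop :=
  ∃ L : Heis → ℝ, GroupLinear L ∧ ∀ ε : ℝ, 0 < ε →
    ∀ᶠ h in 𝓝[≠] (0 : Heis), -ε < (f (hmul x₀ h) - f x₀ - L h) / dk h 0

/-- Subdifferentiability of `F : ℝ → ℝ` at `a`:
`liminf_{t→0} (F(a+t) − F(a) − ℓt)/|t| ≥ 0` for some `ℓ ∈ ℝ`. -/
def RSubdiffAt (F : ℝ → ℝ) (a : ℝ) : Prop :=
  ∃ l : ℝ, ∀ ε : ℝ, 0 < ε →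
    ∀ᶠ t in 𝓝[≠] (0 : ℝ), -ε < (F (a + t) - F a - l * t) / |t|

/-- `f` is Lipschitz with respect to the Koranyi distance. -/
def DkLipschitz (f : Heis → ℝ) : Prop :=
  ∃ K : ℝ, 0 ≤ K ∧ ∀ p q, |f p - f q| ≤ K * dk p q

/-- The first horizontal derivative `X₁f(p)` has value `d`. -/
def HDeriv1 (f : Heis → ℝ) (p : Heis) (d : ℝ) : Prop :=
  Tendsto (fun s : ℝ => (f (hmul p (s, 0, 0)) - f p) / s) (𝓝[≠] (0 : ℝ)) (𝓝 d)

/-- The second horizontal derivative `X₂f(p)` has value `d`. -/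
def HDeriv2 (f : Heis → ℝ) (p : Heis) (d : ℝ) : Prop :=
  Tendsto (fun s : ℝ => (f (hmul p (0, s, 0)) - f p) / s) (𝓝[≠] (0 : ℝ)) (𝓝 d)


lemma glin_zero {L : Heis → ℝ} (h : GroupLinear L) : L (0, 0, 0) = 0 := by
  have h1 := h.1 (0, 0, 0) (0, 0, 0)
  have he : hmul ((0 : ℝ), 0, 0) (0, 0, 0) = (0, 0, 0) := by
    simp [hmul, Prod.ext_iff]
  rw [he] at h1
  linarith

lemma glin_zero' {L : Heis → ℝ} (h : GroupLinear L) : L 0 = 0 := glin_zero h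

lemma glin_inv {L : Heis → ℝ} (h : GroupLinear L) (p : Heis) : L (hinv p) = - L p := by
  have h1 := h.1 p (hinv p)
  have he : hmul p (hinv p) = (0, 0, 0) := by
    simp [hmul, hinv, Prod.ext_iff]
    ring
  rw [he, glin_zero h] at h1
  linarith

lemma glin_hx {L : Heis → ℝ} (h : GroupLinear L) (x : ℝ) :
    L (x, 0, 0) = x * L (1, 0, 0) := by
  rcases lt_trichotomy x 0 with hx | hx | hx
  · have h1 := h.2 (-x) (by linarith) (1, 0, 0)
    have he : hdil (-x) (1, 0, 0) = (-x, 0, 0) := by simp [hdil]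
    rw [he] at h1
    have h2 := glin_inv h (-x, 0, 0)
    have he2 : hinv ((-x : ℝ), 0, 0) = (x, 0, 0) := by simp [hinv]
    rw [he2] at h2
    rw [h2, h1]; ring
  · subst hx; simp [glin_zero' h]; exact glin_zero h
  · have h1 := h.2 x hx (1, 0, 0)
    have he : hdil x (1, 0, 0) = (x, 0, 0) := by simp [hdil]
    rw [he] at h1; exact h1

lemma glin_hy {L : Heis → ℝ} (h : GroupLinear L) (y : ℝ) :
    L (0, y, 0) = y * L (0, 1, 0) := by
  rcases lt_trichotomy y 0 with hy | hy | hy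
  · have h1 := h.2 (-y) (by linarith) (0, 1, 0)
    have he : hdil (-y) (0, 1, 0) = (0, -y, 0) := by simp [hdil]
    rw [he] at h1
    have h2 := glin_inv h (0, -y, 0)
    have he2 : hinv ((0 : ℝ), -y, 0) = (0, y, 0) := by simp [hinv]
    rw [he2] at h2
    rw [h2, h1]; ring
  · subst hy; simp [glin_zero' h]; exact glin_zero h
  · have h1 := h.2 y hy (0, 1, 0)
    have he : hdil y (0, 1, 0) = (0, y, 0) := by simp [hdil]
    rw [he] at h1; exact h1

lemma glin_t {L : Heis → ℝ} (h : GroupLinear L) (t : ℝ) : L (0, 0, t) = 0 := by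
  have h1 : L (0, 0, (1 : ℝ)) = 0 := by
    have key : ((0, 0, 1) : Heis) =
        hmul (hmul (hmul (1, 0, 0) (0, -(1/4), 0)) (-1, 0, 0)) (0, 1/4, 0) := by
      simp [hmul, Prod.ext_iff]
      norm_num
    rw [key, h.1, h.1, h.1, glin_hx h 1, glin_hx h (-1), glin_hy h (-(1/4)),
      glin_hy h (1/4)]
    ring
  rcases lt_trichotomy t 0 with ht | ht | ht
  · have h2 := h.2 (Real.sqrt (-t)) (Real.sqrt_pos.mpr (by linarith)) (0, 0, 1)
    have he : hdil (Real.sqrt (-t)) (0, 0, 1) = (0, 0, -t) := by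
      simp [hdil, Real.sq_sqrt (by linarith : (0:ℝ) ≤ -t)]
    rw [he, h1] at h2
    have h3 := glin_inv h (0, 0, -t)
    have he2 : hinv ((0 : ℝ), 0, -t) = (0, 0, t) := by simp [hinv]
    rw [he2, h2] at h3
    simpa using h3
  · subst ht; exact glin_zero h
  · have h2 := h.2 (Real.sqrt t) (Real.sqrt_pos.mpr ht) (0, 0, 1)
    have he : hdil (Real.sqrt t) (0, 0, 1) = (0, 0, t) := by
      simp [hdil, Real.sq_sqrt ht.le]
    rw [he, h1] at h2
    simpa using h2

lemma glin_formula {L : Heis → ℝ} (h : GroupLinear L) (p : Heis) :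
    L p = p.1 * L (1, 0, 0) + p.2.1 * L (0, 1, 0) := by
  obtain ⟨x, y, t⟩ := p
  have key : ((x, y, t) : Heis) = hmul (x, 0, 0) (hmul (0, y, 0) (0, 0, t + 2*x*y)) := by
    simp [hmul, Prod.ext_iff]
    ring
  rw [key, h.1, h.1, glin_hx h, glin_hy h, glin_t h]
  simp [hmul]

lemma quarter_sqrt (a : ℝ) (ha : 0 ≤ a) : ((a ^ 2 : ℝ)) ^ ((1:ℝ)/4) = Real.sqrt a := by
  rw [Real.sqrt_eq_rpow, ← Real.rpow_natCast a 2, ← Real.rpow_mul ha]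
  norm_num

/-- If `L` is a non-zero group linear map and `H` is not subdifferentiable at `L(a)`,
then `H ∘ L` is not Pansu subdifferentiable at `a`. -/
theorem stmt_12 (L : Heis → ℝ) (hL : GroupLinear L) (hL0 : ∃ p, L p ≠ 0)
    (a : Heis) (Hf : ℝ → ℝ) (hHf : ¬ RSubdiffAt Hf (L a)) :
    ¬ PansuSubdiffAt (fun p => Hf (L p)) a := by
  rintro ⟨Lam, hLam, hsub⟩
  apply hHf
  set A := L (1, 0, 0) with hA
  set B := L (0, 1, 0) with hB
  have hD : 0 < A ^ 2 + B ^ 2 := by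
    obtain ⟨p, hp⟩ := hL0
    rw [glin_formula hL p] at hp
    by_contra hcon
    push_neg at hcon
    have h1 : A = 0 ∧ B = 0 := by constructor <;> nlinarith [sq_nonneg A, sq_nonneg B]
    rw [← hA, ← hB, h1.1, h1.2] at hp; simp at hp
  set D := A ^ 2 + B ^ 2 with hDdef
  set v1 := A / D with hv1
  set v2 := B / D with hv2
  have hDne : D ≠ 0 := ne_of_gt hD
  have hLv : ∀ t : ℝ, L (t * v1, t * v2, 0) = t := by
    intro t
    rw [glin_formula hL]
    simp only [hv1, hv2, ← hA, ← hB]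
    field_simp
    ring
  set s := v1 ^ 2 + v2 ^ 2 with hsdef
  have hs : 0 < s := by
    rw [hsdef, hv1, hv2]
    have he : (A / D) ^ 2 + (B / D) ^ 2 = 1 / D := by
      rw [hDdef] at hDne ⊢
      field_simp
    rw [he]
    exact one_div_pos.mpr hD
  set c := Real.sqrt s with hcdef
  have hc : 0 < c := Real.sqrt_pos.mpr hs
  set l := Lam (v1, v2, 0) with hl
  have hLamt : ∀ t : ℝ, Lam (t * v1, t * v2, 0) = t * l := by
    intro t
    rw [glin_formula hLam, hl, glin_formula hLam (v1, v2, 0)]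
    ring
  have hdk : ∀ t : ℝ, dk ((t * v1, t * v2, 0) : Heis) 0 = |t| * c := by
    intro t
    have he : hmul (hinv ((t * v1, t * v2, 0) : Heis)) 0 =
        ((-(t * v1), -(t * v2), 0) : Heis) := by
      simp [hmul, hinv, Prod.ext_iff]
    rw [dk, he, knorm]
    have h1 : ((-(t * v1)) ^ 2 + (-(t * v2)) ^ 2) = t ^ 2 * s := by rw [hsdef]; ring
    simp only [h1]
    norm_num
    rw [quarter_sqrt _ (by positivity), Real.sqrt_mul (sq_nonneg t), Real.sqrt_sq_eq_abs,
      hcdef]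
  refine ⟨l, fun ε hε => ?_⟩
  have hεc : 0 < ε / c := div_pos hε hc
  have hev := hsub (ε / c) hεc
  have hcont : Tendsto (fun t : ℝ => ((t * v1, t * v2, (0 : ℝ)) : Heis)) (𝓝[≠] 0)
      (𝓝 (0 : Heis)) := by
    have hco : Continuous (fun t : ℝ => ((t * v1, t * v2, (0 : ℝ)) : Heis)) := by fun_prop
    have h0 : ((0 * v1, 0 * v2, (0 : ℝ)) : Heis) = (0 : Heis) := by
      simp [Prod.ext_iff]
    have := hco.continuousAt (x := (0 : ℝ))
    rw [ContinuousAt, h0] at this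
    exact this.mono_left nhdsWithin_le_nhds
  have hne : ∀ᶠ t in 𝓝[≠] (0 : ℝ),
      ((t * v1, t * v2, (0 : ℝ)) : Heis) ∈ ({(0 : Heis)}ᶜ : Set Heis) := by
    filter_upwards [self_mem_nhdsWithin] with t ht
    intro hmem
    apply ht
    have h2 := hLv t
    rw [Set.mem_singleton_iff] at hmem
    rw [hmem, glin_zero' hL] at h2
    exact h2.symm
  have hmap : Tendsto (fun t : ℝ => ((t * v1, t * v2, (0 : ℝ)) : Heis)) (𝓝[≠] 0)
      (𝓝[≠] (0 : Heis)) := by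
    rw [tendsto_nhdsWithin_iff]
    exact ⟨hcont, hne⟩
  have hev2 := hmap.eventually hev
  filter_upwards [hev2, self_mem_nhdsWithin] with t hQ htne
  simp only [Set.mem_compl_iff, Set.mem_singleton_iff] at htne
  have habs : 0 < |t| := abs_pos.mpr htne
  have hLsum : L (hmul a (t * v1, t * v2, 0)) = L a + t := by
    rw [hL.1, hLv]
  rw [hLsum, hLamt, hdk] at hQ
  have key : (Hf (L a + t) - Hf (L a) - l * t) / |t| =
      ((Hf (L a + t) - Hf (L a) - t * l) / (|t| * c)) * c := by
    field_simp
  rw [key]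
  calc -ε = (-(ε / c)) * c := by field_simp
    _ < _ := mul_lt_mul_of_pos_right hQ hc
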